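/- The model space is spacelike Jordan Osserman: for any two vectors X, Y ∈ ℝ^{3s} with g(X, X) = 1 and g(Y, Y) = 1, the Jacobi operators J(X) and J(Y) are similar, i.e. there exists an invertible linear map P : ℝ^{3s} → ℝ^{3s} with J(Y) = P ∘ J(X) ∘ P⁻¹. -/

import Mathlib

open scoped BigOperators

noncomputable section

/-- Index type for `ℝ^{3s}`: the first block indexes `U_1,…,U_s`, the second block
`T_1,…,T_s`, the third block `V_1,…,V_s`. -/
abbrev Ix (s : ℕ) := Fin s ⊕ Fin s ⊕ Fin s

/-- The vector space `ℝ^{3s}`. -/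
abbrev Vc (s : ℕ) := Ix s → ℝ

def uI {s : ℕ} (i : Fin s) : Ix s := Sum.inl i
def tI {s : ℕ} (i : Fin s) : Ix s := Sum.inr (Sum.inl i)
def vI {s : ℕ} (i : Fin s) : Ix s := Sum.inr (Sum.inr i)

/-- The standard basis vector `U_i`. -/
def Uv {s : ℕ} (i : Fin s) : Vc s := Pi.single (uI i) 1
/-- The standard basis vector `T_i`. -/
def Tv {s : ℕ} (i : Fin s) : Vc s := Pi.single (tI i) 1
/-- The standard basis vector `V_i`. -/
def Vv {s : ℕ} (i : Fin s) : Vc s := Pi.single (vI i) 1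

/-- The symmetric bilinear form `g` on `ℝ^{3s}` whose only nonzero values on the
standard basis vectors are `g(U_i,V_i) = g(V_i,U_i) = 1` and `g(T_i,T_i) = -1`. -/
def gM (s : ℕ) (x y : Vc s) : ℝ :=
  ∑ i, (x (uI i) * y (vI i) + x (vI i) * y (uI i) - x (tI i) * y (tI i))

/-- The 4-linear form `R` on `ℝ^{3s}` determined by the `ℤ₂`-symmetries
`R(x,y,z,w) = R(z,w,x,y) = -R(y,x,z,w)` and whose nonzero values on the standard
basis vectors, up to those symmetries, are `R(U_i,U_j,U_j,T_i) = 1` for `i ≠ j`.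
(The eight summands below are precisely the full `ℤ₂`-orbit of the generating
components; the summands cancel in pairs when `i = j`.) -/
def RM (s : ℕ) (x y z w : Vc s) : ℝ :=
  ∑ i, ∑ j,
    (x (uI i) * y (uI j) * z (uI j) * w (tI i)
     - x (uI j) * y (uI i) * z (uI j) * w (tI i)
     - x (uI i) * y (uI j) * z (tI i) * w (uI j)
     + x (uI j) * y (uI i) * z (tI i) * w (uI j)
     + x (uI j) * y (tI i) * z (uI i) * w (uI j)
     - x (tI i) * y (uI j) * z (uI i) * w (uI j)
     - x (uI j) * y (tI i) * z (uI j) * w (uI i)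
     + x (tI i) * y (uI j) * z (uI j) * w (uI i))

/-- `Z_i^+ = U_i + (1/2) V_i`. -/
def Zp {s : ℕ} (i : Fin s) : Vc s := Uv i + (2⁻¹ : ℝ) • Vv i
/-- `Z_i^- = U_i - (1/2) V_i`. -/
def Zm {s : ℕ} (i : Fin s) : Vc s := Uv i - (2⁻¹ : ℝ) • Vv i

/- In the theorems below, the Jacobi operator is taken as a function
`J : ℝ^{3s} → End(ℝ^{3s})` together with the hypothesis that it satisfies its defining
property `g(J(x)y, w) = R(y,x,x,w)` for all `x, y, w`; since `g` is nondegenerate this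
characterizes `J` uniquely. -/
-- chunk A: basic infrastructure
namespace Stmt5
variable {s : ℕ}

def cu (y : Vc s) : Fin s → ℝ := fun i => y (uI i)
def ct (y : Vc s) : Fin s → ℝ := fun i => y (tI i)
def cv (y : Vc s) : Fin s → ℝ := fun i => y (vI i)

def bl (p q r : Fin s → ℝ) : Vc s := Sum.elim p (Sum.elim q r)

@[simp] lemma bl_u (p q r : Fin s → ℝ) (i : Fin s) : bl p q r (uI i) = p i := rfl
@[simp] lemma bl_t (p q r : Fin s → ℝ) (i : Fin s) : bl p q r (tI i) = q i := rfl
@[simp] lemma bl_v (p q r : Fin s → ℝ) (i : Fin s) : bl p q r (vI i) = r i := rfl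
@[simp] lemma cu_bl (p q r : Fin s → ℝ) : cu (bl p q r) = p := rfl
@[simp] lemma ct_bl (p q r : Fin s → ℝ) : ct (bl p q r) = q := rfl
@[simp] lemma cv_bl (p q r : Fin s → ℝ) : cv (bl p q r) = r := rfl

@[simp] lemma bl_inl (p q r : Fin s → ℝ) (i : Fin s) : bl p q r (Sum.inl i) = p i := rfl
@[simp] lemma bl_inrl (p q r : Fin s → ℝ) (i : Fin s) : bl p q r (Sum.inr (Sum.inl i)) = q i := rfl
@[simp] lemma bl_inrr (p q r : Fin s → ℝ) (i : Fin s) : bl p q r (Sum.inr (Sum.inr i)) = r i := rfl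

def dot (p q : Fin s → ℝ) : ℝ := ∑ i, p i * q i

lemma dot_comm (p q : Fin s → ℝ) : dot p q = dot q p := by
  unfold dot; exact Finset.sum_congr rfl fun i _ => mul_comm _ _

@[simp] lemma dot_add_right (p q r : Fin s → ℝ) : dot p (q + r) = dot p q + dot p r := by
  unfold dot; rw [← Finset.sum_add_distrib]; exact Finset.sum_congr rfl fun i _ => by simp [mul_add]

@[simp] lemma dot_sub_right (p q r : Fin s → ℝ) : dot p (q - r) = dot p q - dot p r := by
  unfold dot; rw [← Finset.sum_sub_distrib]; exact Finset.sum_congr rfl fun i _ => by simp [mul_sub]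

@[simp] lemma dot_smul_right (c : ℝ) (p q : Fin s → ℝ) : dot p (c • q) = c * dot p q := by
  unfold dot; rw [Finset.mul_sum]; exact Finset.sum_congr rfl fun i _ => by simp; ring

@[simp] lemma dot_add_left (p q r : Fin s → ℝ) : dot (p + q) r = dot p r + dot q r := by
  rw [dot_comm, dot_add_right, dot_comm r p, dot_comm r q]

@[simp] lemma dot_sub_left (p q r : Fin s → ℝ) : dot (p - q) r = dot p r - dot q r := by
  rw [dot_comm, dot_sub_right, dot_comm r p, dot_comm r q]

@[simp] lemma dot_smul_left (c : ℝ) (p q : Fin s → ℝ) : dot (c • p) q = c * dot p q := by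
  rw [dot_comm, dot_smul_right, dot_comm]

@[simp] lemma dot_zero_right (p : Fin s → ℝ) : dot p 0 = 0 := by
  unfold dot; simp

@[simp] lemma dot_zero_left (p : Fin s → ℝ) : dot (0 : Fin s → ℝ) p = 0 := by
  rw [dot_comm]; simp

@[simp] lemma dot_neg_right (p q : Fin s → ℝ) : dot p (-q) = - dot p q := by
  unfold dot; rw [← Finset.sum_neg_distrib]; exact Finset.sum_congr rfl fun i _ => by simp

@[simp] lemma dot_single_right (p : Fin s → ℝ) (k : Fin s) : dot p (Pi.single k 1) = p k := by
  unfold dot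
  simp [Pi.single_apply, mul_ite, Finset.sum_ite_eq']

@[simp] lemma dot_single_left (p : Fin s → ℝ) (k : Fin s) : dot (Pi.single k 1) p = p k := by
  rw [dot_comm]; simp

lemma dot_self_nonneg (p : Fin s → ℝ) : 0 ≤ dot p p :=
  Finset.sum_nonneg fun i _ => mul_self_nonneg _

lemma eq_zero_of_dot_self (p : Fin s → ℝ) (h : dot p p = 0) : p = 0 := by
  funext i
  have := (Finset.sum_eq_zero_iff_of_nonneg (fun i _ => mul_self_nonneg (p i))).1 h i (Finset.mem_univ i)
  exact mul_self_eq_zero.1 this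

-- basis vector components
@[simp] lemma Uv_u (k j : Fin s) : Uv k (uI j) = if j = k then 1 else 0 := by
  simp [Uv, uI, Pi.single_apply, Sum.inl.injEq]
@[simp] lemma Uv_t (k j : Fin s) : Uv k (tI j) = 0 := by
  simp [Uv, uI, tI]
@[simp] lemma Uv_v (k j : Fin s) : Uv k (vI j) = 0 := by
  simp [Uv, uI, vI]
@[simp] lemma Tv_u (k j : Fin s) : Tv k (uI j) = 0 := by
  simp [Tv, uI, tI]
@[simp] lemma Tv_t (k j : Fin s) : Tv k (tI j) = if j = k then 1 else 0 := by
  simp [Tv, tI, Pi.single_apply]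
@[simp] lemma Tv_v (k j : Fin s) : Tv k (vI j) = 0 := by
  simp [Tv, tI, vI]
@[simp] lemma Vv_u (k j : Fin s) : Vv k (uI j) = 0 := by
  simp [Vv, uI, vI]
@[simp] lemma Vv_t (k j : Fin s) : Vv k (tI j) = 0 := by
  simp [Vv, tI, vI]
@[simp] lemma Vv_v (k j : Fin s) : Vv k (vI j) = if j = k then 1 else 0 := by
  simp [Vv, vI, Pi.single_apply]

lemma gM_Uv (z : Vc s) (k : Fin s) : gM s z (Uv k) = z (vI k) := by
  unfold gM; simp [mul_ite, Finset.sum_ite_eq']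
lemma gM_Tv (z : Vc s) (k : Fin s) : gM s z (Tv k) = -(z (tI k)) := by
  unfold gM; simp [mul_ite, Finset.sum_ite_eq']
lemma gM_Vv (z : Vc s) (k : Fin s) : gM s z (Vv k) = z (uI k) := by
  unfold gM; simp [mul_ite, Finset.sum_ite_eq']

end Stmt5
namespace Stmt5
variable {s : ℕ}

lemma RM_eval (x y w : Vc s) :
    RM s y x x w =
      dot (cu y) (ct w) * dot (cu x) (cu x)
      - dot (cu x) (ct w) * dot (cu x) (cu y)
      - dot (ct x) (cu y) * dot (cu x) (cu w)
      + dot (cu x) (ct x) * dot (cu y) (cu w)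
      + dot (cu x) (ct x) * dot (cu y) (cu w)
      - dot (cu x) (ct y) * dot (cu x) (cu w)
      - dot (ct x) (cu w) * dot (cu x) (cu y)
      + dot (ct y) (cu w) * dot (cu x) (cu x) := by
  unfold RM dot cu ct
  simp only [Finset.sum_mul_sum]
  simp only [← Finset.sum_add_distrib, ← Finset.sum_sub_distrib]
  refine Finset.sum_congr rfl fun i _ => ?_
  refine Finset.sum_congr rfl fun j _ => ?_
  ring

def jop (a b : Fin s → ℝ) (y : Vc s) : Vc s :=
  bl 0 ((-(dot a a)) • cu y + dot a (cu y) • a)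
    ((dot a a) • ct y - dot a (cu y) • b - (dot b (cu y) + dot a (ct y)) • a
      + (2 * dot a b) • cu y)

lemma J_eq (J : Vc s → Module.End ℝ (Vc s))
    (hJ : ∀ x y w : Vc s, gM s (J x y) w = RM s y x x w)
    (x y : Vc s) : J x y = jop (cu x) (ct x) y := by
  funext idx
  rcases idx with i | i | i
  · show J x y (uI i) = _
    rw [← gM_Vv (J x y) i, hJ, RM_eval]
    have h1 : cu (Vv i) = 0 := by funext j; simp [cu]
    have h2 : ct (Vv i) = 0 := by funext j; simp [ct]
    simp [h1, h2, jop]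
  · show J x y (tI i) = _
    have := gM_Tv (J x y) i
    rw [hJ, RM_eval] at this
    have h1 : cu (Tv i) = 0 := by funext j; simp [cu]
    have h2 : ct (Tv i) = Pi.single i 1 := by
      funext j; simp [ct, Tv, tI, Pi.single_apply]
    rw [h1, h2] at this
    simp only [dot_zero_right, dot_single_right] at this
    have : J x y (tI i) = -(cu y i * dot (cu x) (cu x) - cu x i * dot (cu x) (cu y)) := by
      linarith [this]
    rw [this]
    simp only [jop, bl_inrl, Pi.add_apply, Pi.smul_apply, Pi.sub_apply, Pi.neg_apply, smul_eq_mul]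
    ring
  · show J x y (vI i) = _
    rw [← gM_Uv (J x y) i, hJ, RM_eval]
    have h1 : cu (Uv i) = Pi.single i 1 := by
      funext j; simp [cu, Uv, uI, Pi.single_apply]
    have h2 : ct (Uv i) = 0 := by funext j; simp [ct]
    rw [h1, h2]
    simp only [dot_zero_right, dot_single_right]
    simp only [jop, bl_inrr, Pi.add_apply, Pi.sub_apply, Pi.neg_apply, Pi.smul_apply, smul_eq_mul]
    ring

end Stmt5
namespace Stmt5
variable {s : ℕ}

-- component arithmetic lemmas
@[simp] lemma cu_add (y z : Vc s) : cu (y + z) = cu y + cu z := rfl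
@[simp] lemma ct_add (y z : Vc s) : ct (y + z) = ct y + ct z := rfl
@[simp] lemma cv_add (y z : Vc s) : cv (y + z) = cv y + cv z := rfl
@[simp] lemma cu_smul (c : ℝ) (y : Vc s) : cu (c • y) = c • cu y := rfl
@[simp] lemma ct_smul (c : ℝ) (y : Vc s) : ct (c • y) = c • ct y := rfl
@[simp] lemma cv_smul (c : ℝ) (y : Vc s) : cv (c • y) = c • cv y := rfl

-- the Q-map data
def bp (a b : Fin s → ℝ) : Fin s → ℝ := b - (dot a b / dot a a) • a
def Efun (a b w : Fin s → ℝ) : Fin s → ℝ := (-(dot a w / dot a a)) • bp a b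
def Cfun (a b w : Fin s → ℝ) : Fin s → ℝ :=
  (-(dot (bp a b) w / dot a a)) • a + (2 * (dot a b / dot a a)) • w

@[simp] lemma Efun_zero (a b : Fin s → ℝ) : Efun a b 0 = 0 := by simp [Efun]
@[simp] lemma Cfun_zero (a b : Fin s → ℝ) : Cfun a b 0 = 0 := by simp [Cfun]

lemma Efun_add (a b w w' : Fin s → ℝ) : Efun a b (w + w') = Efun a b w + Efun a b w' := by
  funext i; simp [Efun]; ring
lemma Efun_smul (a b : Fin s → ℝ) (c : ℝ) (w : Fin s → ℝ) :
    Efun a b (c • w) = c • Efun a b w := by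
  funext i; simp [Efun]; ring
lemma Cfun_add (a b w w' : Fin s → ℝ) : Cfun a b (w + w') = Cfun a b w + Cfun a b w' := by
  funext i; simp [Cfun]; ring
lemma Cfun_smul (a b : Fin s → ℝ) (c : ℝ) (w : Fin s → ℝ) :
    Cfun a b (c • w) = c • Cfun a b w := by
  funext i; simp [Cfun]; ring

def qf (a b : Fin s → ℝ) (y : Vc s) : Vc s :=
  bl (cu y) (ct y + Efun a b (cu y)) (cv y + Cfun a b (ct y))
def qg (a b : Fin s → ℝ) (y : Vc s) : Vc s :=
  bl (cu y) (ct y - Efun a b (cu y)) (cv y - Cfun a b (ct y - Efun a b (cu y)))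

lemma qgf (a b : Fin s → ℝ) (y : Vc s) : qg a b (qf a b y) = y := by
  funext idx
  rcases idx with i | i | i <;>
    simp [qf, qg, cu, ct, cv, uI, tI, vI, Efun_add, Cfun_add] <;> try ring
lemma qfg (a b : Fin s → ℝ) (y : Vc s) : qf a b (qg a b y) = y := by
  funext idx
  rcases idx with i | i | i <;>
    simp [qf, qg, cu, ct, cv, uI, tI, vI, Efun_add, Cfun_add] <;> try ring

def qe (a b : Fin s → ℝ) : Vc s ≃ₗ[ℝ] Vc s where
  toFun := qf a b
  map_add' y z := by
    funext idx
    rcases idx with i | i | i <;>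
      simp [qf, cu, ct, cv, uI, tI, vI, Efun_add, Cfun_add] <;> try ring
  map_smul' c y := by
    funext idx
    rcases idx with i | i | i <;>
      simp [qf, cu, ct, cv, uI, tI, vI, Efun_smul, Cfun_smul] <;> try ring
  invFun := qg a b
  left_inv := qgf a b
  right_inv := qfg a b

-- the D-map data
def mvec (a : Fin s → ℝ) (o : Fin s) : Fin s → ℝ :=
  a - Real.sqrt (dot a a) • (Pi.single o 1 : Fin s → ℝ)
def Ofun (a : Fin s → ℝ) (o : Fin s) (w : Fin s → ℝ) : Fin s → ℝ :=
  w - (2 * dot (mvec a o) w / dot (mvec a o) (mvec a o)) • mvec a o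

@[simp] lemma Ofun_zero (a : Fin s → ℝ) (o : Fin s) : Ofun a o 0 = 0 := by simp [Ofun]
lemma Ofun_add (a : Fin s → ℝ) (o : Fin s) (w w' : Fin s → ℝ) :
    Ofun a o (w + w') = Ofun a o w + Ofun a o w' := by
  funext i; simp [Ofun]; ring
lemma Ofun_smul (a : Fin s → ℝ) (o : Fin s) (c : ℝ) (w : Fin s → ℝ) :
    Ofun a o (c • w) = c • Ofun a o w := by
  funext i; simp [Ofun]; ring
lemma Ofun_neg (a : Fin s → ℝ) (o : Fin s) (w : Fin s → ℝ) :
    Ofun a o (-w) = - Ofun a o w := by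
  funext i; simp [Ofun]; ring

lemma Ofun_invol (a : Fin s → ℝ) (o : Fin s) (w : Fin s → ℝ) :
    Ofun a o (Ofun a o w) = w := by
  by_cases hd : dot (mvec a o) (mvec a o) = 0
  · have hm : mvec a o = 0 := eq_zero_of_dot_self _ hd
    simp [Ofun, hm]
  · funext i
    simp only [Ofun, dot_sub_right, dot_smul_right, Pi.sub_apply, Pi.smul_apply, smul_eq_mul]
    field_simp
    ring

def df (a : Fin s → ℝ) (o : Fin s) (y : Vc s) : Vc s :=
  bl (Ofun a o (cu y)) ((dot a a)⁻¹ • Ofun a o (ct y)) (((dot a a) ^ 2)⁻¹ • Ofun a o (cv y))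
def dg (a : Fin s → ℝ) (o : Fin s) (y : Vc s) : Vc s :=
  bl (Ofun a o (cu y)) ((dot a a) • Ofun a o (ct y)) (((dot a a) ^ 2) • Ofun a o (cv y))

def de (a : Fin s → ℝ) (o : Fin s) (hS : dot a a ≠ 0) : Vc s ≃ₗ[ℝ] Vc s where
  toFun := df a o
  map_add' y z := by
    funext idx
    rcases idx with i | i | i <;>
      simp [df, cu, ct, cv, uI, tI, vI, Ofun_add] <;> try ring
  map_smul' c y := by
    funext idx
    rcases idx with i | i | i <;>
      simp [df, cu, ct, cv, uI, tI, vI, Ofun_smul] <;> try ring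
  invFun := dg a o
  left_inv y := by
    funext idx
    have h2 : ((dot a a) ^ 2) ≠ 0 := pow_ne_zero _ hS
    rcases idx with i | i | i <;>
      simp [df, dg, cu, ct, cv, uI, tI, vI, Ofun_smul, Ofun_invol, smul_smul, mul_inv_cancel₀ hS, mul_inv_cancel₀ h2] <;> try ring
  right_inv y := by
    funext idx
    have h2 : ((dot a a) ^ 2) ≠ 0 := pow_ne_zero _ hS
    rcases idx with i | i | i <;>
      simp [df, dg, cu, ct, cv, uI, tI, vI, Ofun_smul, Ofun_invol, smul_smul, inv_mul_cancel₀ hS, inv_mul_cancel₀ h2] <;> try ring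

end Stmt5
namespace Stmt5
variable {s : ℕ}

def Mfun (a w : Fin s → ℝ) : Fin s → ℝ := (-(dot a a)) • w + dot a w • a
def jop0 (a : Fin s → ℝ) (y : Vc s) : Vc s := bl 0 (Mfun a (cu y)) (-(Mfun a (ct y)))
def M0 (o : Fin s) (w : Fin s → ℝ) : Fin s → ℝ := -w + w o • (Pi.single o 1 : Fin s → ℝ)
def can (o : Fin s) (y : Vc s) : Vc s := bl 0 (M0 o (cu y)) (-(M0 o (ct y)))

lemma conj1 (a b : Fin s → ℝ) (hS : dot a a ≠ 0) (y : Vc s) :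
    qf a b (jop a b y) = jop0 a (qf a b y) := by
  funext idx
  rcases idx with i | i | i
  · simp [qf, jop, jop0]
  · simp only [qf, jop, jop0, bl_inrl, cu_bl, ct_bl, cv_bl, Mfun, Efun, bp,
      dot_add_right, dot_sub_right, dot_smul_right, dot_add_left, dot_sub_left, dot_smul_left,
      dot_zero_right, dot_zero_left, Pi.add_apply, Pi.sub_apply, Pi.smul_apply, Pi.neg_apply,
      smul_eq_mul]
    field_simp
    ring
  · simp only [qf, jop, jop0, bl_inrr, cu_bl, ct_bl, cv_bl, Mfun, Efun, Cfun, bp,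
      dot_add_right, dot_sub_right, dot_smul_right, dot_add_left, dot_sub_left, dot_smul_left,
      dot_zero_right, dot_zero_left, Pi.add_apply, Pi.sub_apply, Pi.smul_apply, Pi.neg_apply,
      smul_eq_mul]
    rw [dot_comm b a]
    field_simp
    ring

lemma Ofun_Mfun (a : Fin s → ℝ) (o : Fin s) (w : Fin s → ℝ) :
    Ofun a o (Mfun a w) = dot a a • M0 o (Ofun a o w) := by
  set r := Real.sqrt (dot a a) with hrdef
  have hr : r * r = dot a a := Real.mul_self_sqrt (dot_self_nonneg a)
  by_cases hd : dot (mvec a o) (mvec a o) = 0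
  · have hm : mvec a o = 0 := eq_zero_of_dot_self _ hd
    have ha : a = r • (Pi.single o 1 : Fin s → ℝ) := by
      have := hm; unfold mvec at this; rw [← hrdef] at this; exact sub_eq_zero.1 this
    have hO : ∀ v : Fin s → ℝ, Ofun a o v = v := by
      intro v; simp [Ofun, hm]
    rw [hO, hO]
    funext k
    simp only [Mfun, M0, Pi.add_apply, Pi.smul_apply, Pi.neg_apply, smul_eq_mul]
    rw [ha]
    simp only [dot_smul_left, dot_single_left, Pi.smul_apply, smul_eq_mul, Pi.single_apply]
    by_cases hk : k = o
    · subst hk; simp; ring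
    · simp [hk]
      all_goals ring
  · have hma : dot (mvec a o) a = dot a a - r * a o := by
      simp [mvec, dot_sub_left, dot_smul_left, dot_single_left, ← hrdef]
    have hmw : dot (mvec a o) w = dot a w - r * w o := by
      simp [mvec, dot_sub_left, dot_smul_left, dot_single_left, ← hrdef]
    have hmm : dot (mvec a o) (mvec a o) = 2 * (dot a a - r * a o) := by
      have h1 : dot (mvec a o) (mvec a o)
          = dot (mvec a o) a - r * (a o - r * 1) := by
        simp only [mvec, ← hrdef, dot_sub_right, dot_smul_right, dot_single_right,
          Pi.sub_apply, Pi.smul_apply, Pi.single_eq_same, smul_eq_mul]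
      rw [h1, hma]
      nlinarith [hr]
    have hmk : ∀ j, mvec a o j = a j - r * (if j = o then 1 else 0) := by
      intro j; simp [mvec, ← hrdef, Pi.single_apply]
    funext k
    simp only [Ofun, Mfun, M0, dot_add_right, dot_smul_right, Pi.add_apply, Pi.sub_apply,
      Pi.smul_apply, Pi.neg_apply, smul_eq_mul, Pi.single_apply, hma, hmw, hmm, hmk]
    rw [hmm] at hd
    rw [← hr] at hd ⊢
    have hd3 : -(r * a o) + r ^ 2 ≠ 0 := fun h => hd (by linear_combination 2 * h)
    by_cases hk : k = o
    · subst hk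
      simp only [if_pos rfl]
      field_simp
      simp only [↓reduceIte]
      linear_combination (r ^ 2 * w k - dot a w * a k) * mul_inv_cancel₀ hd3
    · simp only [if_neg hk]
      field_simp
      linear_combination (-(dot a w * a k)) * mul_inv_cancel₀ hd3

lemma conj2 (a : Fin s → ℝ) (o : Fin s) (hS : dot a a ≠ 0) (y : Vc s) :
    df a o (jop0 a y) = can o (df a o y) := by
  funext idx
  rcases idx with i | i | i
  · simp [df, jop0, can]
  · simp only [df, jop0, can, bl_inrl, cu_bl, ct_bl, cv_bl, Ofun_Mfun, Pi.smul_apply,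
      smul_eq_mul]
    field_simp
  · simp only [df, jop0, can, bl_inrr, cu_bl, ct_bl, cv_bl, Ofun_neg, Ofun_Mfun, M0,
      Pi.add_apply, Pi.sub_apply, Pi.smul_apply, Pi.neg_apply, smul_eq_mul, Pi.single_apply]
    by_cases hio : i = o
    · subst hio
      simp only [if_pos rfl]
      field_simp
      all_goals ring
    · simp only [if_neg hio]
      field_simp
      all_goals ring

end Stmt5
namespace Stmt5
variable {s : ℕ}

lemma S_ne (x : Vc s) (hx : gM s x x = 1) : dot (cu x) (cu x) ≠ 0 := by
  intro h
  have hz : cu x = 0 := eq_zero_of_dot_self _ h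
  have hle : gM s x x ≤ 0 := by
    unfold gM
    apply Finset.sum_nonpos
    intro i _
    have h1 : x (uI i) = 0 := congrFun hz i
    rw [h1]
    nlinarith [mul_self_nonneg (x (tI i))]
  rw [hx] at hle; linarith

end Stmt5


/-- the model space is spacelike Jordan Osserman: for any unit spacelike
vectors `X, Y` (`g(X,X) = g(Y,Y) = 1`), the Jacobi operators `J(X)` and `J(Y)` are
similar, i.e. conjugate by an invertible linear map of `ℝ^{3s}`. -/
theorem stmt5 (s : ℕ) (hs : 2 ≤ s)
    (J : Vc s → Module.End ℝ (Vc s))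
    (hJ : ∀ x y w : Vc s, gM s (J x y) w = RM s y x x w)
    (X Y : Vc s) (hX : gM s X X = 1) (hY : gM s Y Y = 1) :
    ∃ P : Vc s ≃ₗ[ℝ] Vc s, ∀ y : Vc s, J Y y = P (J X (P.symm y)) := by
  classical
  open Stmt5 in
  have ho : 0 < s := by omega
  let o : Fin s := ⟨0, ho⟩
  have hSX : Stmt5.dot (Stmt5.cu X) (Stmt5.cu X) ≠ 0 := Stmt5.S_ne X hX
  have hSY : Stmt5.dot (Stmt5.cu Y) (Stmt5.cu Y) ≠ 0 := Stmt5.S_ne Y hY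
  let PX : Vc s ≃ₗ[ℝ] Vc s :=
    Stmt5.qe (Stmt5.cu X) (Stmt5.ct X) ≪≫ₗ Stmt5.de (Stmt5.cu X) o hSX
  let PY : Vc s ≃ₗ[ℝ] Vc s :=
    Stmt5.qe (Stmt5.cu Y) (Stmt5.ct Y) ≪≫ₗ Stmt5.de (Stmt5.cu Y) o hSY
  have hcX : ∀ z, PX (J X z) = Stmt5.can o (PX z) := by
    intro z
    have e1 : PX (J X z)
        = Stmt5.df (Stmt5.cu X) o (Stmt5.qf (Stmt5.cu X) (Stmt5.ct X) (J X z)) := rfl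
    have e2 : PX z
        = Stmt5.df (Stmt5.cu X) o (Stmt5.qf (Stmt5.cu X) (Stmt5.ct X) z) := rfl
    rw [e1, e2, Stmt5.J_eq J hJ X z, Stmt5.conj1 _ _ hSX, Stmt5.conj2 _ _ hSX]
  have hcY : ∀ z, PY (J Y z) = Stmt5.can o (PY z) := by
    intro z
    have e1 : PY (J Y z)
        = Stmt5.df (Stmt5.cu Y) o (Stmt5.qf (Stmt5.cu Y) (Stmt5.ct Y) (J Y z)) := rfl
    have e2 : PY z
        = Stmt5.df (Stmt5.cu Y) o (Stmt5.qf (Stmt5.cu Y) (Stmt5.ct Y) z) := rfl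
    rw [e1, e2, Stmt5.J_eq J hJ Y z, Stmt5.conj1 _ _ hSY, Stmt5.conj2 _ _ hSY]
  refine ⟨PX ≪≫ₗ PY.symm, fun y => ?_⟩
  have key : PY (J Y y) = PX (J X (PX.symm (PY y))) := by
    rw [hcY y, hcX (PX.symm (PY y)), LinearEquiv.apply_symm_apply]
  have hmain : J Y y = PY.symm (PX (J X (PX.symm (PY y)))) := by
    rw [← key, LinearEquiv.symm_apply_apply]
  simpa [LinearEquiv.trans_apply] using hmain
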